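/- For every Φ ∈ H(G,K,V), every m ∈ M and every v ∈ V: the family of elements Φ(nm)(v), indexed by the cosets (N∩K)n ∈ (N∩K)\N, has only finitely many nonzero members; the element Σ_{(N∩K)n ∈ (N∩K)\N} (image of Φ(nm)(v) in V_{K∩N}) is independent of the choice of coset representatives and depends only on the image v̄ of v; and the homomorphism 𝒮', transported to the Hecke algebras via the isomorphisms H(G,K,V) ≅ End_{C[G]}(ind_K^G V) and H(M,K∩M,V_{K∩N}) ≅ End_{C[M]}(ind_{K∩M}^M V_{K∩N}), is given by the formula 𝒮'(Φ)(m)(v̄) = Σ_{(N∩K)n ∈ (N∩K)\N} (image of Φ(nm)(v) in V_{K∩N}). -/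

import Mathlib

open scoped Classical

noncomputable section
namespace Paper

variable {C : Type} [Field C] {G : Type} [Group G]

/-- The compactly induced module `ind_K^G V`, as a `C`-submodule of `G → V`. -/
def cInd (K : Subgroup G) {V : Type} [AddCommGroup V] [Module C V]
    (ρ : Representation C ↥K V) : Submodule C (G → V) where
  carrier := {f | (∀ (k : ↥K) (x : G), f (↑k * x) = ρ k (f x)) ∧
    ∃ S : Finset G, ∀ x : G, f x ≠ 0 → ∃ s ∈ S, ∃ k ∈ K, x = k * s}
  add_mem' := by
    rintro a b ⟨ha1, Sa, ha2⟩ ⟨hb1, Sb, hb2⟩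
    refine ⟨fun k x => by simp [ha1 k x, hb1 k x], Sa ∪ Sb, fun x hx => ?_⟩
    by_cases h : a x ≠ 0
    · obtain ⟨s, hs, k, hk, h'⟩ := ha2 x h
      exact ⟨s, Finset.mem_union_left _ hs, k, hk, h'⟩
    · push_neg at h
      have hbx : b x ≠ 0 := by
        intro hb0; apply hx; simp only [Pi.add_apply, h, hb0, add_zero]
      obtain ⟨s, hs, k, hk, h'⟩ := hb2 x hbx
      exact ⟨s, Finset.mem_union_right _ hs, k, hk, h'⟩
  zero_mem' := ⟨fun k x => by simp, ∅, fun x hx => absurd rfl hx⟩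
  smul_mem' := by
    rintro c a ⟨ha1, Sa, ha2⟩
    refine ⟨fun k x => by simp [ha1 k x], Sa, fun x hx => ?_⟩
    refine ha2 x (fun h0 => hx ?_)
    simp only [Pi.smul_apply, h0, smul_zero]

/-- The (full) induced module `Ind_P^G W`, as a `C`-submodule of `G → W`. -/
def fInd (P : Subgroup G) {W : Type} [AddCommGroup W] [Module C W]
    (τ : Representation C ↥P W) : Submodule C (G → W) where
  carrier := {f | ∀ (p : ↥P) (x : G), f (↑p * x) = τ p (f x)}
  add_mem' := by intro a b ha hb p x; simp [ha p x, hb p x]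
  zero_mem' := by intro p x; simp
  smul_mem' := by intro c a ha p x; simp [ha p x]

/-- Right translation action of `G` on `ind_K^G V`. -/
def cIndRep (K : Subgroup G) {V : Type} [AddCommGroup V] [Module C V]
    (ρ : Representation C ↥K V) : Representation C G ↥(cInd K ρ) where
  toFun g :=
    { toFun := fun f => ⟨fun x => (f : G → V) (x * g), by
        refine ⟨fun k x => ?_, ?_⟩
        · show (f : G → V) ((↑k * x) * g) = ρ k ((f : G → V) (x * g))
          rw [mul_assoc]; exact f.2.1 k (x * g)
        · obtain ⟨S, hS⟩ := f.2.2
          refine ⟨S.image (· * g⁻¹), fun x hx => ?_⟩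
          obtain ⟨s, hs, k, hk, h'⟩ := hS (x * g) hx
          refine ⟨s * g⁻¹, Finset.mem_image_of_mem _ hs, k, hk, ?_⟩
          rw [← mul_assoc, ← h', mul_assoc, mul_inv_cancel, mul_one]⟩
      map_add' := fun a b => rfl
      map_smul' := fun c a => rfl }
  map_one' := by ext f x; simp
  map_mul' := fun a b => by ext f x; simp [mul_assoc]

/-- Right translation action of `G` on `Ind_P^G W`. -/
def fIndRep (P : Subgroup G) {W : Type} [AddCommGroup W] [Module C W]
    (τ : Representation C ↥P W) : Representation C G ↥(fInd P τ) where
  toFun g :=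
    { toFun := fun f => ⟨fun x => (f : G → W) (x * g), by
        intro p x
        show (f : G → W) ((↑p * x) * g) = τ p ((f : G → W) (x * g))
        rw [mul_assoc]; exact f.2 p (x * g)⟩
      map_add' := fun a b => rfl
      map_smul' := fun c a => rfl }
  map_one' := by ext f x; simp
  map_mul' := fun a b => by ext f x; simp [mul_assoc]

/-- Equivariant `C`-linear maps between two representations of a monoid `Γ`. -/
def equivHom {Γ : Type} [Monoid Γ] {X Y : Type} [AddCommGroup X] [Module C X]
    [AddCommGroup Y] [Module C Y] (σ : Representation C Γ X) (τ : Representation C Γ Y) :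
    Submodule C (X →ₗ[C] Y) where
  carrier := {φ | ∀ γ : Γ, φ ∘ₗ σ γ = τ γ ∘ₗ φ}
  add_mem' := by
    intro a b ha hb γ; ext x
    have h1 := LinearMap.congr_fun (ha γ) x
    have h2 := LinearMap.congr_fun (hb γ) x
    simp only [LinearMap.comp_apply] at h1 h2 ⊢
    simp [h1, h2]
  zero_mem' := by intro γ; ext x; simp
  smul_mem' := by
    intro c a ha γ; ext x
    have h1 := LinearMap.congr_fun (ha γ) x
    simp only [LinearMap.comp_apply] at h1 ⊢
    simp [h1]

/-- The element `[1,v]` of `ind_K^G V` : the function supported on `K` with value `v` at `1`. -/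
def unitFn (K : Subgroup G) {V : Type} [AddCommGroup V] [Module C V]
    (ρ : Representation C ↥K V) (v : V) : G → V :=
  fun g => if h : g ∈ K then ρ ⟨g, h⟩ v else 0

lemma unitFn_mem (K : Subgroup G) {V : Type} [AddCommGroup V] [Module C V]
    (ρ : Representation C ↥K V) (v : V) : unitFn K ρ v ∈ cInd K ρ := by
  constructor
  · intro k x
    by_cases hx : x ∈ K
    · have hkx : (↑k * x) ∈ K := mul_mem k.2 hx
      simp only [unitFn, dif_pos hx, dif_pos hkx]
      have : (⟨↑k * x, hkx⟩ : ↥K) = k * ⟨x, hx⟩ := rfl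
      rw [this, map_mul]; rfl
    · have hkx : (↑k * x) ∉ K := by
        intro h
        exact hx (by simpa using mul_mem (inv_mem k.2) h)
      simp [unitFn, dif_neg hx, dif_neg hkx]
  · refine ⟨{1}, fun x hx => ⟨1, Finset.mem_singleton_self 1, x, ?_, (mul_one x).symm⟩⟩
    by_contra hxK
    exact hx (by simp [unitFn, dif_neg hxK])

/-- `[1,v]` as an element of the submodule. -/
def unitElt (K : Subgroup G) {V : Type} [AddCommGroup V] [Module C V]
    (ρ : Representation C ↥K V) (v : V) : ↥(cInd K ρ) :=
  ⟨unitFn K ρ v, unitFn_mem K ρ v⟩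

/-- The subspace of `V` spanned by the elements `ρ(n)v - v`, `n ∈ K ⊓ N`. -/
def coinvKer (K N : Subgroup G) {V : Type} [AddCommGroup V] [Module C V]
    (ρ : Representation C ↥K V) : Submodule C V :=
  Submodule.span C {x | ∃ (n : G) (hn : n ∈ K ⊓ N) (v : V), x = ρ ⟨n, hn.1⟩ v - v}

/-- The representation of `K ⊓ M` on the coinvariants `V_{K ⊓ N}`. -/
def coinvRep (K M N : Subgroup G) {V : Type} [AddCommGroup V] [Module C V]
    (ρ : Representation C ↥K V)
    (hnorm : ∀ (m : ↥(K ⊓ M)) (n : G), n ∈ K ⊓ N → ↑m * n * (↑m)⁻¹ ∈ K ⊓ N) :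
    Representation C ↥(K ⊓ M) (V ⧸ coinvKer K N ρ) where
  toFun m := Submodule.mapQ _ _ (ρ ⟨↑m, m.2.1⟩) (by
    rw [coinvKer, Submodule.span_le]
    rintro x ⟨n, hn, v, rfl⟩
    refine Submodule.mem_comap.mpr ?_
    have key : ρ ⟨↑m, m.2.1⟩ (ρ ⟨n, hn.1⟩ v - v)
        = ρ ⟨↑m * n * (↑m)⁻¹, (hnorm m n hn).1⟩ (ρ ⟨↑m, m.2.1⟩ v) - ρ ⟨↑m, m.2.1⟩ v := by
      rw [map_sub]
      congr 1
      have h2 : (⟨↑m * n * (↑m)⁻¹, (hnorm m n hn).1⟩ : ↥K) * ⟨↑m, m.2.1⟩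
          = ⟨↑m, m.2.1⟩ * ⟨n, hn.1⟩ := by
        ext; simp [mul_assoc]
      calc ρ ⟨↑m, m.2.1⟩ (ρ ⟨n, hn.1⟩ v) = (ρ (⟨↑m, m.2.1⟩ * ⟨n, hn.1⟩)) v := by
            rw [map_mul]; rfl
        _ = ρ (⟨↑m * n * (↑m)⁻¹, (hnorm m n hn).1⟩ * ⟨↑m, m.2.1⟩) v := by rw [h2]
        _ = _ := by rw [map_mul]; rfl
    rw [key]
    exact Submodule.subset_span ⟨↑m * n * (↑m)⁻¹, hnorm m n hn, ρ ⟨↑m, m.2.1⟩ v, rfl⟩)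
  map_one' := by
    refine LinearMap.ext fun x => ?_
    obtain ⟨v, rfl⟩ := Submodule.Quotient.mk_surjective _ x
    rw [Submodule.mapQ_apply]
    have h1 : (⟨((1 : ↥(K ⊓ M)) : G), (1 : ↥(K ⊓ M)).2.1⟩ : ↥K) = 1 := by ext; rfl
    rw [h1, map_one]
    rfl
  map_mul' := by
    intro a b
    refine LinearMap.ext fun x => ?_
    obtain ⟨v, rfl⟩ := Submodule.Quotient.mk_surjective _ x
    have h1 : (⟨((a * b : ↥(K ⊓ M)) : G), (a * b).2.1⟩ : ↥K)
        = ⟨↑a, a.2.1⟩ * ⟨↑b, b.2.1⟩ := by ext; rfl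
    simp only [Submodule.mapQ_apply, Module.End.mul_apply, h1, map_mul]

/-- The inclusion of `(K ⊓ M).subgroupOf M` into `K ⊓ M`. -/
def toKM (K M : Subgroup G) : ↥((K ⊓ M).subgroupOf M) →* ↥(K ⊓ M) where
  toFun x := ⟨↑↑x, x.2⟩
  map_one' := rfl
  map_mul' _ _ := rfl

def rhoBar (K M N : Subgroup G) {V : Type} [AddCommGroup V] [Module C V]
    (ρ : Representation C ↥K V)
    (hnorm : ∀ (m : ↥(K ⊓ M)) (n : G), n ∈ K ⊓ N → ↑m * n * (↑m)⁻¹ ∈ K ⊓ N) :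
    Representation C ↥((K ⊓ M).subgroupOf M) (V ⧸ coinvKer K N ρ) :=
  (coinvRep K M N ρ hnorm).comp (toKM K M)

def cIndBar (K M N : Subgroup G) {V : Type} [AddCommGroup V] [Module C V]
    (ρ : Representation C ↥K V)
    (hnorm : ∀ (m : ↥(K ⊓ M)) (n : G), n ∈ K ⊓ N → ↑m * n * (↑m)⁻¹ ∈ K ⊓ N) :
    Submodule C (↥M → V ⧸ coinvKer K N ρ) :=
  cInd ((K ⊓ M).subgroupOf M) (rhoBar K M N ρ hnorm)

def tauM {P M : Subgroup G} (hMP : M ≤ P) {W : Type} [AddCommGroup W] [Module C W]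
    (τP : Representation C ↥P W) : Representation C ↥M W :=
  τP.comp (Subgroup.inclusion hMP)

/-- The space `Hom_{C[G]}(ind_K^G V, Ind_P^G W)` of intertwiners. -/
def HomG (K P : Subgroup G) {V W : Type} [AddCommGroup V] [Module C V]
    [AddCommGroup W] [Module C W]
    (ρ : Representation C ↥K V) (τP : Representation C ↥P W) :
    Submodule C (↥(cInd K ρ) →ₗ[C] ↥(fInd P τP)) :=
  equivHom (cIndRep K ρ) (fIndRep P τP)

/-- The space `Hom_{C[M]}(ind_{K∩M}^M V_{K∩N}, W)`. -/
def HomBar (K P M N : Subgroup G) (hMP : M ≤ P) {V W : Type} [AddCommGroup V] [Module C V]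
    [AddCommGroup W] [Module C W] (ρ : Representation C ↥K V)
    (hnorm : ∀ (m : ↥(K ⊓ M)) (n' : G), n' ∈ K ⊓ N → ↑m * n' * (↑m)⁻¹ ∈ K ⊓ N)
    (τP : Representation C ↥P W) :
    Submodule C (↥(cIndBar K M N ρ hnorm) →ₗ[C] W) :=
  equivHom (cIndRep ((K ⊓ M).subgroupOf M) (rhoBar K M N ρ hnorm)) (tauM hMP τP)

/-- The element `[1, v̄]` of `ind_{K∩M}^M V_{K∩N}`. -/
def unitBar (K M N : Subgroup G) {V : Type} [AddCommGroup V] [Module C V]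
    (ρ : Representation C ↥K V)
    (hnorm : ∀ (m : ↥(K ⊓ M)) (n' : G), n' ∈ K ⊓ N → ↑m * n' * (↑m)⁻¹ ∈ K ⊓ N)
    (v : V) : ↥(cIndBar K M N ρ hnorm) :=
  unitElt ((K ⊓ M).subgroupOf M) (rhoBar K M N ρ hnorm) (Submodule.Quotient.mk v)

/-- The characterizing property of `j` : `j(I) = u` iff `u([1,v̄]) = (I [1,v])(1)`
for all `v ∈ V`. -/
def charJ (K P M N : Subgroup G) {V W : Type} [AddCommGroup V] [Module C V]
    [AddCommGroup W] [Module C W] (ρ : Representation C ↥K V)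
    (hnorm : ∀ (m : ↥(K ⊓ M)) (n' : G), n' ∈ K ⊓ N → ↑m * n' * (↑m)⁻¹ ∈ K ⊓ N)
    (τP : Representation C ↥P W)
    (I : ↥(cInd K ρ) →ₗ[C] ↥(fInd P τP)) (u : ↥(cIndBar K M N ρ hnorm) →ₗ[C] W) : Prop :=
  ∀ v : V, u (unitBar K M N ρ hnorm v) = (↑(I (unitElt K ρ v)) : G → W) 1

/-- `End_{C[G]}(ind_K^G V)`. -/
def EndG (K : Subgroup G) {V : Type} [AddCommGroup V] [Module C V]
    (ρ : Representation C ↥K V) :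
    Submodule C (↥(cInd K ρ) →ₗ[C] ↥(cInd K ρ)) :=
  equivHom (cIndRep K ρ) (cIndRep K ρ)

/-- `End_{C[M]}(ind_{K∩M}^M V_{K∩N})`. -/
def EndBar (K M N : Subgroup G) {V : Type} [AddCommGroup V] [Module C V]
    (ρ : Representation C ↥K V)
    (hnorm : ∀ (m : ↥(K ⊓ M)) (n' : G), n' ∈ K ⊓ N → ↑m * n' * (↑m)⁻¹ ∈ K ⊓ N) :
    Submodule C (↥(cIndBar K M N ρ hnorm) →ₗ[C] ↥(cIndBar K M N ρ hnorm)) :=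
  equivHom (cIndRep ((K ⊓ M).subgroupOf M) (rhoBar K M N ρ hnorm))
    (cIndRep ((K ⊓ M).subgroupOf M) (rhoBar K M N ρ hnorm))

/-- Hecke algebra H(G,K,V) as a submodule of `G → End V`. -/
def Hecke (K : Subgroup G) {V : Type} [AddCommGroup V] [Module C V]
    (ρ : Representation C ↥K V) : Submodule C (G → Module.End C V) where
  carrier := {Φ | (∀ (k k' : ↥K) (g : G), Φ (↑k * g * ↑k') = ρ k * Φ g * ρ k') ∧
    ∃ S : Finset G, ∀ g : G, Φ g ≠ 0 → ∃ s ∈ S, ∃ k ∈ K, ∃ k' ∈ K, g = k * s * k'}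
  add_mem' := by
    rintro a b ⟨ha1, Sa, ha2⟩ ⟨hb1, Sb, hb2⟩
    refine ⟨fun k k' g => by simp [ha1 k k' g, hb1 k k' g, mul_add, add_mul],
      Sa ∪ Sb, fun g hg => ?_⟩
    by_cases h : a g ≠ 0
    · obtain ⟨s, hs, hrest⟩ := ha2 g h
      exact ⟨s, Finset.mem_union_left _ hs, hrest⟩
    · push_neg at h
      have hbg : b g ≠ 0 := by
        intro hb0; apply hg; simp only [Pi.add_apply, h, hb0, add_zero]
      obtain ⟨s, hs, hrest⟩ := hb2 g hbg
      exact ⟨s, Finset.mem_union_right _ hs, hrest⟩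
  zero_mem' := ⟨fun k k' g => by simp, ∅, fun g hg => absurd rfl hg⟩
  smul_mem' := by
    rintro c a ⟨ha1, Sa, ha2⟩
    refine ⟨fun k k' g => by
      simp only [Pi.smul_apply, ha1 k k' g, mul_smul_comm, smul_mul_assoc],
      Sa, fun g hg => ?_⟩
    refine ha2 g (fun h0 => hg ?_)
    simp only [Pi.smul_apply, h0, smul_zero]

/-- Convolution action of functions `G → End V` on functions `G → V`. -/
def convAct (K : Subgroup G) {V : Type} [AddCommGroup V] [Module C V]
    (Φ : G → Module.End C V) (f : G → V) : G → V :=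
  fun g => ∑ᶠ q : G ⧸ K, Φ (Quotient.out q) (f ((Quotient.out q)⁻¹ * g))



section Helpers

variable {C : Type} [Field C] {G : Type} [Group G] {V : Type} [AddCommGroup V] [Module C V]

lemma hecke_left {K : Subgroup G} {ρ : Representation C ↥K V} {Φ : G → Module.End C V}
    (hΦ : Φ ∈ Hecke K ρ) {k : G} (hk : k ∈ K) (g : G) :
    Φ (k * g) = ρ ⟨k, hk⟩ * Φ g := by
  have h := hΦ.1 ⟨k, hk⟩ 1 g
  simpa using h

lemma hecke_right {K : Subgroup G} {ρ : Representation C ↥K V} {Φ : G → Module.End C V}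
    (hΦ : Φ ∈ Hecke K ρ) (g : G) {k : G} (hk : k ∈ K) :
    Φ (g * k) = Φ g * ρ ⟨k, hk⟩ := by
  have h := hΦ.1 1 ⟨k, hk⟩ g
  simpa using h

/-- `Φ ∗ [1,v] = (g ↦ Φ(g)v)`. -/
lemma conv_unit {K : Subgroup G} {ρ : Representation C ↥K V} {Φ : G → Module.End C V}
    (hΦ : Φ ∈ Hecke K ρ) (v : V) (g : G) :
    convAct K Φ (unitFn K ρ v) g = Φ g v := by
  have key : ∀ q : G ⧸ K, q ≠ QuotientGroup.mk g →
      Φ (Quotient.out q) (unitFn K ρ v ((Quotient.out q)⁻¹ * g)) = 0 := by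
    intro q hq
    have hnot : (Quotient.out q)⁻¹ * g ∉ K := by
      intro h
      apply hq
      calc q = Quotient.mk _ (Quotient.out q) := (Quotient.out_eq q).symm
        _ = QuotientGroup.mk g := Quotient.sound (QuotientGroup.leftRel_apply.mpr h)
    rw [unitFn, dif_neg hnot, map_zero]
  rw [convAct, finsum_eq_single _ (QuotientGroup.mk g) key]
  have hk : (Quotient.out (QuotientGroup.mk g : G ⧸ K))⁻¹ * g ∈ K :=
    QuotientGroup.leftRel_apply.mp (Quotient.mk_out g)
  rw [unitFn, dif_pos hk]
  have h2 : Φ (Quotient.out (QuotientGroup.mk g : G ⧸ K))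
      (ρ ⟨(Quotient.out (QuotientGroup.mk g : G ⧸ K))⁻¹ * g, hk⟩ v)
      = Φ (Quotient.out (QuotientGroup.mk g : G ⧸ K)
          * ((Quotient.out (QuotientGroup.mk g : G ⧸ K))⁻¹ * g)) v := by
    rw [hecke_right hΦ _ hk]; rfl
  rw [h2, mul_inv_cancel_left]

lemma cIndRep_unitElt {K : Subgroup G} (ρ : Representation C ↥K V) {k : G} (hk : k ∈ K) (v : V) :
    cIndRep K ρ k (unitElt K ρ v) = unitElt K ρ (ρ ⟨k, hk⟩ v) := by
  apply Subtype.ext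
  funext x
  show unitFn K ρ v (x * k) = unitFn K ρ (ρ ⟨k, hk⟩ v) x
  by_cases hx : x ∈ K
  · have hxk : x * k ∈ K := mul_mem hx hk
    rw [unitFn, unitFn, dif_pos hxk, dif_pos hx]
    have h : (⟨x * k, hxk⟩ : ↥K) = ⟨x, hx⟩ * ⟨k, hk⟩ := rfl
    rw [h, map_mul]; rfl
  · have hxk : x * k ∉ K := fun h => hx (by simpa using mul_mem h (inv_mem hk))
    rw [unitFn, unitFn, dif_neg hxk, dif_neg hx]

lemma rhoBar_apply_mk {K M N : Subgroup G} (ρ : Representation C ↥K V)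
    (hnorm : ∀ (m : ↥(K ⊓ M)) (n' : G), n' ∈ K ⊓ N → ↑m * n' * (↑m)⁻¹ ∈ K ⊓ N)
    (x : ↥((K ⊓ M).subgroupOf M)) (w : V) :
    rhoBar K M N ρ hnorm x (Submodule.Quotient.mk w)
      = Submodule.Quotient.mk (p := coinvKer K N ρ) (ρ ⟨↑↑x, x.2.1⟩ w) := by
  rfl

lemma mk_rho_eq {K N : Subgroup G} (ρ : Representation C ↥K V) {n : G} (hn : n ∈ K ⊓ N) (w : V) :
    Submodule.Quotient.mk (p := coinvKer K N ρ) (ρ ⟨n, hn.1⟩ w)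
      = Submodule.Quotient.mk (p := coinvKer K N ρ) w := by
  rw [Submodule.Quotient.eq]
  exact Submodule.subset_span ⟨n, hn, w, rfl⟩

end Helpers

/-!
STATEMENT 4.  Setting as in Statements 1–2, with (A1) for `(G,K)` and for `(M, K∩M)`, and
`V` finite-dimensional (A2).  For `Φ ∈ H(G,K,V)`, `m ∈ M`, `v ∈ V` :
* the family of elements `Φ(nm)(v)`, indexed by the right cosets `(N∩K)n ∈ (N∩K)\N`, has
  only finitely many nonzero members;
* the sum `Σ_{(N∩K)n} (image of Φ(nm)(v) in V_{K∩N})` is independent of the choice of coset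
  representatives and depends only on the image `v̄` of `v`;
* the homomorphism `𝒮'` of Statement 2 (`u = 𝒮'(b)` iff `u ∈ End_{C[M]}` and
  `charJ (I₀ ∘ b) u`), transported to the Hecke algebras via the isomorphisms
  `H(G,K,V) ≅ End_{C[G]}(ind_K^G V)` (`b` realizes `Φ` iff `b f = Φ ∗ f` = `convAct K Φ f`)
  and `H(M,K∩M,V_{K∩N}) ≅ End_{C[M]}(ind_{K∩M}^M V_{K∩N})` (`u` realized by `Ψ`), is given
  by the formula `𝒮'(Φ)(m)(v̄) = Σ_{(N∩K)n ∈ (N∩K)\N} (image of Φ(nm)(v))`.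
-/
set_option maxHeartbeats 3200000 in
theorem statement4 {V : Type} [AddCommGroup V] [Module C V] [FiniteDimensional C V]
    (K P M N : Subgroup G)
    (hMP : M ≤ P) (hNP : N ≤ P)
    (hNnormal : ∀ p ∈ P, ∀ n' ∈ N, p * n' * p⁻¹ ∈ N)
    (hMN : M ⊓ N = ⊥)
    (hPprod : ∀ p ∈ P, ∃ m ∈ M, ∃ n' ∈ N, p = m * n')
    (hG : ∀ g : G, ∃ k ∈ K, ∃ p ∈ P, g = k * p)
    (hKP : ∀ x ∈ K ⊓ P, ∃ m ∈ K ⊓ M, ∃ n' ∈ K ⊓ N, x = m * n')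
    (hnorm : ∀ (m : ↥(K ⊓ M)) (n' : G), n' ∈ K ⊓ N → ↑m * n' * (↑m)⁻¹ ∈ K ⊓ N)
    (hA1 : ∀ g : G, ∃ S : Finset G, ∀ x : G,
      (∃ k ∈ K, ∃ k' ∈ K, x = k * g * k') → ∃ s ∈ S, ∃ k ∈ K, x = k * s)
    (hA1M : ∀ m : ↥M, ∃ S : Finset ↥M, ∀ x : ↥M,
      (∃ k ∈ (K ⊓ M).subgroupOf M, ∃ k' ∈ (K ⊓ M).subgroupOf M, x = k * m * k') →
      ∃ s ∈ S, ∃ k ∈ (K ⊓ M).subgroupOf M, x = k * s)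
    (ρ : Representation C ↥K V)
    -- the C[P]-module structure τ₀ on W₀ = ind_{K∩M}^M V_{K∩N}
    (τ₀ : Representation C ↥P ↥(cIndBar K M N ρ hnorm))
    (hτ₀N : ∀ x : ↥P, (x : G) ∈ N → τ₀ x = 1)
    (hτ₀M : ∀ (x : ↥P) (hx : (x : G) ∈ M),
      τ₀ x = cIndRep ((K ⊓ M).subgroupOf M) (rhoBar K M N ρ hnorm) ⟨↑x, hx⟩)
    -- I₀ = j_{W₀}⁻¹(id)
    (I₀ : ↥(cInd K ρ) →ₗ[C] ↥(fInd P τ₀))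
    (hI₀mem : I₀ ∈ HomG K P ρ τ₀)
    (hI₀ : charJ K P M N ρ hnorm τ₀ I₀
      (LinearMap.id : ↥(cIndBar K M N ρ hnorm) →ₗ[C] ↥(cIndBar K M N ρ hnorm))) :
    -- finitely many of the Φ(nm)(v), n ∈ (N∩K)\N, are nonzero
    (∀ Φ ∈ Hecke K ρ, ∀ (m : ↥M) (v : V),
      {q : Quotient (QuotientGroup.rightRel ((K ⊓ N).subgroupOf N)) |
        Φ ((↑(Quotient.out q) : G) * ↑m) v ≠ 0}.Finite) ∧
    -- the sum of the images in V_{K∩N} does not depend on the choice of representatives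
    (∀ Φ ∈ Hecke K ρ, ∀ (m : ↥M) (v : V),
      ∀ rep : Quotient (QuotientGroup.rightRel ((K ⊓ N).subgroupOf N)) → ↥N,
        (∀ q, Quotient.mk (QuotientGroup.rightRel ((K ⊓ N).subgroupOf N)) (rep q) = q) →
        ∑ᶠ q : Quotient (QuotientGroup.rightRel ((K ⊓ N).subgroupOf N)),
            Submodule.Quotient.mk (p := coinvKer K N ρ) (Φ ((↑(rep q) : G) * ↑m) v)
          = ∑ᶠ q : Quotient (QuotientGroup.rightRel ((K ⊓ N).subgroupOf N)),
            Submodule.Quotient.mk (p := coinvKer K N ρ)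
              (Φ ((↑(Quotient.out q) : G) * ↑m) v)) ∧
    -- ... and depends only on the image of v in V_{K∩N}
    (∀ Φ ∈ Hecke K ρ, ∀ (m : ↥M) (v v' : V),
      Submodule.Quotient.mk (p := coinvKer K N ρ) v
        = Submodule.Quotient.mk (p := coinvKer K N ρ) v' →
      ∑ᶠ q : Quotient (QuotientGroup.rightRel ((K ⊓ N).subgroupOf N)),
          Submodule.Quotient.mk (p := coinvKer K N ρ)
            (Φ ((↑(Quotient.out q) : G) * ↑m) v)
        = ∑ᶠ q : Quotient (QuotientGroup.rightRel ((K ⊓ N).subgroupOf N)),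
          Submodule.Quotient.mk (p := coinvKer K N ρ)
            (Φ ((↑(Quotient.out q) : G) * ↑m) v')) ∧
    -- the formula for 𝒮' on the Hecke algebras
    (∀ Φ ∈ Hecke K ρ, ∀ b ∈ EndG K ρ,
      (∀ f : ↥(cInd K ρ), (↑(b f) : G → V) = convAct K Φ ↑f) →
      ∀ u : ↥(cIndBar K M N ρ hnorm) →ₗ[C] ↥(cIndBar K M N ρ hnorm),
        u ∈ EndBar K M N ρ hnorm →
        charJ K P M N ρ hnorm τ₀ (I₀ ∘ₗ b) u →
        ∀ Ψ : ↥M → Module.End C (V ⧸ coinvKer K N ρ),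
          Ψ ∈ Hecke ((K ⊓ M).subgroupOf M) (rhoBar K M N ρ hnorm) →
          (∀ h : ↥(cIndBar K M N ρ hnorm),
            (↑(u h) : ↥M → V ⧸ coinvKer K N ρ)
              = convAct ((K ⊓ M).subgroupOf M) Ψ ↑h) →
          ∀ (m : ↥M) (v : V),
            Ψ m (Submodule.Quotient.mk (p := coinvKer K N ρ) v)
              = ∑ᶠ q : Quotient (QuotientGroup.rightRel ((K ⊓ N).subgroupOf N)),
                Submodule.Quotient.mk (p := coinvKer K N ρ)
                  (Φ ((↑(Quotient.out q) : G) * ↑m) v)) := by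
  classical
  -- a finite set of right `K`-cosets covering the support of a Hecke element
  have hTex : ∀ Φ, Φ ∈ Hecke K ρ → ∃ T : Finset (Quotient (QuotientGroup.rightRel K)),
      ∀ x : G, Φ x ≠ 0 → Quotient.mk (QuotientGroup.rightRel K) x ∈ T := by
    intro Φ hΦ
    obtain ⟨S, hS⟩ := hΦ.2
    refine ⟨(S.biUnion fun s => (hA1 s).choose).image
      (Quotient.mk (QuotientGroup.rightRel K)), ?_⟩
    intro x hx
    obtain ⟨s, hs, k, hk, k', hk', hxe⟩ := hS x hx
    obtain ⟨s', hs', k₂, hk₂, hx2⟩ := (hA1 s).choose_spec x ⟨k, hk, k', hk', hxe⟩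
    refine Finset.mem_image.mpr ⟨s', Finset.mem_biUnion.mpr ⟨s, hs, hs'⟩, ?_⟩
    refine Quotient.sound (QuotientGroup.rightRel_apply.mpr ?_)
    rw [hx2, mul_inv_cancel_right]
    exact hk₂
  have key1 : ∀ Φ ∈ Hecke K ρ, ∀ (m : ↥M) (v : V),
      {q : Quotient (QuotientGroup.rightRel ((K ⊓ N).subgroupOf N)) |
        Φ ((↑(Quotient.out q) : G) * ↑m) v ≠ 0}.Finite := by
    intro Φ hΦ m v
    obtain ⟨T, hT⟩ := hTex Φ hΦ
    have hinj : Set.InjOn (fun q : Quotient (QuotientGroup.rightRel ((K ⊓ N).subgroupOf N)) =>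
        Quotient.mk (QuotientGroup.rightRel K) ((↑(Quotient.out q) : G) * ↑m))
        {q | Φ ((↑(Quotient.out q) : G) * ↑m) v ≠ 0} := by
      intro q₁ _ q₂ _ h
      have hrel : ((↑(Quotient.out q₂) : G) * ↑m) * ((↑(Quotient.out q₁) : G) * ↑m)⁻¹ ∈ K :=
        QuotientGroup.rightRel_apply.mp (Quotient.exact h)
      have hrel2 : (Quotient.out q₂ * (Quotient.out q₁)⁻¹ : ↥N) ∈ (K ⊓ N).subgroupOf N := by
        rw [Subgroup.mem_subgroupOf, Subgroup.mem_inf]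
        refine ⟨?_, SetLike.coe_mem _⟩
        have he : (((Quotient.out q₂ * (Quotient.out q₁)⁻¹ : ↥N)) : G)
            = ((↑(Quotient.out q₂) : G) * ↑m) * ((↑(Quotient.out q₁) : G) * ↑m)⁻¹ := by
          push_cast; group
        rw [he]; exact hrel
      rw [← Quotient.out_eq q₁, ← Quotient.out_eq q₂]
      exact Quotient.sound (QuotientGroup.rightRel_apply.mpr hrel2)
    apply Set.Finite.of_finite_image ?_ hinj
    apply T.finite_toSet.subset
    rintro _ ⟨q, hq, rfl⟩
    exact hT _ (fun h0 => hq (by simp [h0]))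
  have hcos : ∀ Φ ∈ Hecke K ρ, ∀ (m : ↥M) (v : V) (n n' : ↥N),
      Quotient.mk (QuotientGroup.rightRel ((K ⊓ N).subgroupOf N)) n
        = Quotient.mk (QuotientGroup.rightRel ((K ⊓ N).subgroupOf N)) n' →
      Submodule.Quotient.mk (p := coinvKer K N ρ) (Φ ((↑n : G) * ↑m) v)
        = Submodule.Quotient.mk (p := coinvKer K N ρ) (Φ ((↑n' : G) * ↑m) v) := by
    intro Φ hΦ m v n n' h
    have hrel : (↑(n' * n⁻¹) : G) ∈ K ⊓ N := by
      have h1 : n' * n⁻¹ ∈ (K ⊓ N).subgroupOf N :=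
        QuotientGroup.rightRel_apply.mp (Quotient.exact h)
      exact (Subgroup.mem_subgroupOf).mp h1
    have heq : (↑n' : G) * ↑m = ↑(n' * n⁻¹) * ((↑n : G) * ↑m) := by push_cast; group
    rw [heq, hecke_left hΦ hrel.1, Module.End.mul_apply, mk_rho_eq ρ hrel]
  have key2 : ∀ Φ ∈ Hecke K ρ, ∀ (m : ↥M) (v : V),
      ∀ rep : Quotient (QuotientGroup.rightRel ((K ⊓ N).subgroupOf N)) → ↥N,
        (∀ q, Quotient.mk (QuotientGroup.rightRel ((K ⊓ N).subgroupOf N)) (rep q) = q) →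
        ∑ᶠ q : Quotient (QuotientGroup.rightRel ((K ⊓ N).subgroupOf N)),
            Submodule.Quotient.mk (p := coinvKer K N ρ) (Φ ((↑(rep q) : G) * ↑m) v)
          = ∑ᶠ q : Quotient (QuotientGroup.rightRel ((K ⊓ N).subgroupOf N)),
            Submodule.Quotient.mk (p := coinvKer K N ρ)
              (Φ ((↑(Quotient.out q) : G) * ↑m) v) := by
    intro Φ hΦ m v rep hrep
    exact finsum_congr fun q => hcos Φ hΦ m v (rep q) (Quotient.out q)
      (by rw [hrep q, Quotient.out_eq])
  have key3 : ∀ Φ ∈ Hecke K ρ, ∀ (m : ↥M) (v v' : V),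
      Submodule.Quotient.mk (p := coinvKer K N ρ) v
        = Submodule.Quotient.mk (p := coinvKer K N ρ) v' →
      ∑ᶠ q : Quotient (QuotientGroup.rightRel ((K ⊓ N).subgroupOf N)),
          Submodule.Quotient.mk (p := coinvKer K N ρ)
            (Φ ((↑(Quotient.out q) : G) * ↑m) v)
        = ∑ᶠ q : Quotient (QuotientGroup.rightRel ((K ⊓ N).subgroupOf N)),
          Submodule.Quotient.mk (p := coinvKer K N ρ)
            (Φ ((↑(Quotient.out q) : G) * ↑m) v') := by
    intro Φ hΦ m v v' hvv'
    set F : V → V ⧸ coinvKer K N ρ := fun w =>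
      ∑ᶠ q : Quotient (QuotientGroup.rightRel ((K ⊓ N).subgroupOf N)),
        Submodule.Quotient.mk (p := coinvKer K N ρ)
          (Φ ((↑(Quotient.out q) : G) * ↑m) w) with hFdef
    have hsupp : ∀ w : V,
        (Function.support fun q : Quotient (QuotientGroup.rightRel ((K ⊓ N).subgroupOf N)) =>
          Submodule.Quotient.mk (p := coinvKer K N ρ)
            (Φ ((↑(Quotient.out q) : G) * ↑m) w)).Finite := by
      intro w
      apply (key1 Φ hΦ m w).subset
      intro q hq
      rw [Function.mem_support] at hq
      intro h0
      exact hq (by simp [h0])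
    have hadd : ∀ w w' : V, F (w + w') = F w + F w' := by
      intro w w'
      rw [hFdef]
      simp only
      rw [← finsum_add_distrib (hsupp w) (hsupp w')]
      exact finsum_congr fun q => by rw [map_add]; rfl
    have hsmul : ∀ (c : C) (w : V), F (c • w) = c • F w := by
      intro c w
      rw [hFdef]
      simp only
      rw [smul_finsum' c (hsupp w)]
      exact finsum_congr fun q => by rw [map_smul]; rfl
    have hneg : ∀ w, F (-w) = - F w := fun w => by
      rw [← neg_one_smul C w, hsmul, neg_one_smul]
    have hF0 : F 0 = 0 := by
      rw [hFdef]
      simp only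
      apply finsum_eq_zero_of_forall_eq_zero
      intro q; simp
    have hFrho : ∀ (n₀ : G) (hn₀ : n₀ ∈ K ⊓ N) (w : V), F (ρ ⟨n₀, hn₀.1⟩ w) = F w := by
      intro n₀ hn₀ w
      have hcN : (↑m : G) * n₀ * (↑m : G)⁻¹ ∈ N := hNnormal ↑m (hMP m.2) n₀ hn₀.2
      have hmapr : ∀ (c : ↥N) (a b : ↥N),
          (QuotientGroup.rightRel ((K ⊓ N).subgroupOf N)) a b →
          (QuotientGroup.rightRel ((K ⊓ N).subgroupOf N)) (a * c) (b * c) := by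
        intro c a b hab
        rw [QuotientGroup.rightRel_apply] at hab ⊢
        have he : b * c * (a * c)⁻¹ = b * a⁻¹ := by group
        rw [he]; exact hab
      set cN : ↥N := ⟨(↑m : G) * n₀ * (↑m : G)⁻¹, hcN⟩ with hcNdef
      set e : Quotient (QuotientGroup.rightRel ((K ⊓ N).subgroupOf N))
          ≃ Quotient (QuotientGroup.rightRel ((K ⊓ N).subgroupOf N)) :=
        { toFun := Quotient.map' (· * cN) (hmapr cN)
          invFun := Quotient.map' (· * cN⁻¹) (hmapr cN⁻¹)
          left_inv := fun q => by
            induction q using Quotient.inductionOn with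
            | h a =>
              show Quotient.map' _ _ (Quotient.map' _ _ (Quotient.mk _ a)) = _
              rw [Quotient.map'_mk'', Quotient.map'_mk'']
              simp
          right_inv := fun q => by
            induction q using Quotient.inductionOn with
            | h a =>
              show Quotient.map' _ _ (Quotient.map' _ _ (Quotient.mk _ a)) = _
              rw [Quotient.map'_mk'', Quotient.map'_mk'']
              simp } with hedef
      rw [hFdef]
      simp only
      have step : ∀ q : Quotient (QuotientGroup.rightRel ((K ⊓ N).subgroupOf N)),
          Submodule.Quotient.mk (p := coinvKer K N ρ)
            (Φ ((↑(Quotient.out q) : G) * ↑m) (ρ ⟨n₀, hn₀.1⟩ w))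
          = Submodule.Quotient.mk (p := coinvKer K N ρ)
            (Φ ((↑(Quotient.out (e q)) : G) * ↑m) w) := by
        intro q
        have h1 : Φ ((↑(Quotient.out q) : G) * ↑m) (ρ ⟨n₀, hn₀.1⟩ w)
            = Φ ((↑(Quotient.out q) : G) * ↑m * n₀) w := by
          rw [hecke_right hΦ _ hn₀.1, Module.End.mul_apply]
        have h2 : (↑(Quotient.out q) : G) * ↑m * n₀ = (↑(Quotient.out q * cN) : G) * ↑m := by
          push_cast; rw [hcNdef]
          show _ = _ * ((↑m : G) * n₀ * (↑m : G)⁻¹) * ↑m; group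
        rw [h1, h2]
        refine hcos Φ hΦ m w (Quotient.out q * cN) (Quotient.out (e q)) ?_
        rw [Quotient.out_eq (e q)]
        have he2 : e q = Quotient.map' (fun x => x * cN) (hmapr cN) q := rfl
        rw [he2]
        conv_rhs => rw [← Quotient.out_eq q]
        rfl
      rw [finsum_congr step]
      exact finsum_comp_equiv e (f := fun q' => Submodule.Quotient.mk (p := coinvKer K N ρ)
        (Φ ((↑(Quotient.out q') : G) * ↑m) w))
    have hker : ∀ x ∈ coinvKer K N ρ, F x = 0 := by
      intro x hx
      induction hx using Submodule.span_induction with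
      | mem y hy =>
        obtain ⟨n₀, hn₀, w, rfl⟩ := hy
        have hFsub : F (ρ ⟨n₀, hn₀.1⟩ w - w) = F (ρ ⟨n₀, hn₀.1⟩ w) - F w := by
          rw [sub_eq_add_neg, hadd, hneg, ← sub_eq_add_neg]
        rw [hFsub, hFrho n₀ hn₀ w, sub_self]
      | zero => exact hF0
      | add y z _ _ hy hz => rw [hadd, hy, hz, add_zero]
      | smul c y _ hy => rw [hsmul, hy, smul_zero]
    have hmem : v - v' ∈ coinvKer K N ρ := (Submodule.Quotient.eq _).mp hvv'
    have hfinal : F v = F v' := by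
      have h1 : F (v' + (v - v')) = F v' + F (v - v') := hadd _ _
      rw [add_sub_cancel] at h1
      rw [h1, hker _ hmem, add_zero]
    exact hfinal
  refine ⟨key1, key2, key3, ?_⟩
  intro Φ hΦ b hb hbconv u hu hchar Ψ hΨ hΨconv m v
  -- choice functions for the Iwasawa-type decompositions
  choose kk hkk pp hpp hkp using hG
  choose mm hmm nn hnn hmn using hPprod
  have hdect : ∀ t : G, t = kk t * (mm (pp t) (hpp t) * nn (pp t) (hpp t)) := by
    intro t
    conv_lhs => rw [hkp t, hmn (pp t) (hpp t)]
  have hn2mem : ∀ t : G, (↑m : G) * nn (pp t) (hpp t) * (↑m : G)⁻¹ ∈ N :=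
    fun t => hNnormal ↑m (hMP m.2) _ (hnn _ _)
  set cmap : Quotient (QuotientGroup.rightRel K)
      → Quotient (QuotientGroup.rightRel ((K ⊓ N).subgroupOf N)) :=
    fun q => Quotient.mk (QuotientGroup.rightRel ((K ⊓ N).subgroupOf N))
      (⟨(↑m : G) * nn (pp (Quotient.out q)) (hpp (Quotient.out q)) * (↑m : G)⁻¹,
        hn2mem (Quotient.out q)⟩ : ↥N) with hcmap
  set condP : Quotient (QuotientGroup.rightRel K) → Prop :=
    fun q => ((m * ⟨(mm (pp (Quotient.out q)) (hpp (Quotient.out q)))⁻¹,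
      inv_mem (hmm (pp (Quotient.out q)) (hpp (Quotient.out q)))⟩ : ↥M)
        ∈ (K ⊓ M).subgroupOf M) with hcondP
  set FB : Quotient (QuotientGroup.rightRel ((K ⊓ N).subgroupOf N)) → V ⧸ coinvKer K N ρ :=
    fun c => Submodule.Quotient.mk (p := coinvKer K N ρ)
      (Φ ((↑(Quotient.out c) : G) * ↑m) v) with hFB
  -- step 1 : reduce to the value of `I₀ (b [1,v])` at `1`, then at `m`
  set f : ↥(cInd K ρ) := b (unitElt K ρ v) with hfdef
  have h1 : Ψ m (Submodule.Quotient.mk (p := coinvKer K N ρ) v)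
      = (↑((↑(I₀ f) : G → ↥(cIndBar K M N ρ hnorm)) 1) : ↥M → V ⧸ coinvKer K N ρ) m := by
    calc Ψ m (Submodule.Quotient.mk (p := coinvKer K N ρ) v)
        = convAct ((K ⊓ M).subgroupOf M) Ψ
            (↑(unitBar K M N ρ hnorm v) : ↥M → V ⧸ coinvKer K N ρ) m :=
          (conv_unit hΨ (Submodule.Quotient.mk v) m).symm
      _ = (↑(u (unitBar K M N ρ hnorm v)) : ↥M → V ⧸ coinvKer K N ρ) m :=
          (congrFun (hΨconv (unitBar K M N ρ hnorm v)) m).symm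
      _ = _ := by rw [hchar v]; rfl
  -- step 2 : decompose `b [1,v]` as a finite sum of translated unit elements
  obtain ⟨T, hT⟩ := hTex Φ hΦ
  have hbf : (↑f : G → V) = fun g => Φ g v := by
    rw [hfdef, hbconv]
    funext g
    exact conv_unit hΦ v g
  have hdecomp : f = ∑ q ∈ T, (cIndRep K ρ (Quotient.out q)⁻¹)
      (unitElt K ρ (Φ (Quotient.out q) v)) := by
    apply Subtype.ext
    rw [AddSubmonoidClass.coe_finset_sum]
    funext x
    rw [Finset.sum_apply]
    have hterm : ∀ q ∈ T,
        (↑((cIndRep K ρ (Quotient.out q)⁻¹) (unitElt K ρ (Φ (Quotient.out q) v))) : G → V) x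
          = if Quotient.mk (QuotientGroup.rightRel K) x = q then Φ x v else 0 := by
      intro q _
      have hshow : (↑((cIndRep K ρ (Quotient.out q)⁻¹)
            (unitElt K ρ (Φ (Quotient.out q) v))) : G → V) x
          = unitFn K ρ (Φ (Quotient.out q) v) (x * (Quotient.out q)⁻¹) := rfl
      rw [hshow, unitFn]
      by_cases hxq : x * (Quotient.out q)⁻¹ ∈ K
      · rw [dif_pos hxq, if_pos ?_]
        · have hc : ρ ⟨x * (Quotient.out q)⁻¹, hxq⟩ (Φ (Quotient.out q) v)
              = Φ (x * (Quotient.out q)⁻¹ * Quotient.out q) v := by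
            rw [hecke_left hΦ hxq]; rfl
          rw [hc, inv_mul_cancel_right]
        · rw [← Quotient.out_eq q]
          refine Quotient.sound (QuotientGroup.rightRel_apply.mpr ?_)
          have he : Quotient.out q * x⁻¹ = (x * (Quotient.out q)⁻¹)⁻¹ := by group
          rw [he]; exact inv_mem hxq
      · rw [dif_neg hxq, if_neg ?_]
        intro hmk
        apply hxq
        have hx2 : Quotient.out q * x⁻¹ ∈ K :=
          QuotientGroup.rightRel_apply.mp (Quotient.exact (by rw [hmk, Quotient.out_eq]))
        have he : x * (Quotient.out q)⁻¹ = (Quotient.out q * x⁻¹)⁻¹ := by group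
        rw [he]; exact inv_mem hx2
    have hfx : (↑f : G → V) x = Φ x v := by rw [hbf]
    rw [hfx, Finset.sum_congr rfl hterm,
      Finset.sum_ite_eq T (Quotient.mk (QuotientGroup.rightRel K) x) (fun _ => Φ x v)]
    by_cases hxT : Quotient.mk (QuotientGroup.rightRel K) x ∈ T
    · rw [if_pos hxT]
    · rw [if_neg hxT]
      by_contra h0
      refine hxT (hT x (fun hz => h0 ?_))
      rw [hz]; rfl
  -- step 3 : equivariance of `I₀` and evaluation of the unit terms
  have hI₀mem' : ∀ γ : G, I₀ ∘ₗ (cIndRep K ρ) γ = (fIndRep P τ₀) γ ∘ₗ I₀ := hI₀mem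
  have hIeq : ∀ (g : G) (h : ↥(cInd K ρ)) (x : G),
      (↑(I₀ ((cIndRep K ρ) g h)) : G → ↥(cIndBar K M N ρ hnorm)) x
        = (↑(I₀ h) : G → ↥(cIndBar K M N ρ hnorm)) (x * g) := by
    intro g h x
    have h3 : I₀ ((cIndRep K ρ) g h) = (fIndRep P τ₀) g (I₀ h) :=
      LinearMap.congr_fun (hI₀mem' g) h
    rw [h3]; rfl
  have hunit1 : ∀ w : V, (↑(I₀ (unitElt K ρ w)) : G → ↥(cIndBar K M N ρ hnorm)) 1
      = unitBar K M N ρ hnorm w := fun w => (hI₀ w).symm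
  have hunitk : ∀ (w : V) (k : G) (hk : k ∈ K),
      (↑(I₀ (unitElt K ρ w)) : G → ↥(cIndBar K M N ρ hnorm)) k
        = unitBar K M N ρ hnorm (ρ ⟨k, hk⟩ w) := by
    intro w k hk
    have h2 := hIeq k (unitElt K ρ w) 1
    rw [one_mul] at h2
    rw [← h2, cIndRep_unitElt ρ hk w, hunit1]
  have hfIndmem : ∀ w : V, ∀ (p : ↥P) (x : G),
      (↑(I₀ (unitElt K ρ w)) : G → ↥(cIndBar K M N ρ hnorm)) (↑p * x)
        = τ₀ p ((↑(I₀ (unitElt K ρ w)) : G → ↥(cIndBar K M N ρ hnorm)) x) :=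
    fun w => (I₀ (unitElt K ρ w)).2
  have heval : ∀ t : G,
      (↑(I₀ (unitElt K ρ (Φ t v))) : G → ↥(cIndBar K M N ρ hnorm)) t⁻¹
        = (cIndRep ((K ⊓ M).subgroupOf M) (rhoBar K M N ρ hnorm))
            ⟨(mm (pp t) (hpp t))⁻¹, inv_mem (hmm (pp t) (hpp t))⟩
            (unitBar K M N ρ hnorm (Φ (pp t) v)) := by
    intro t
    have hti : t⁻¹ = (pp t)⁻¹ * (kk t)⁻¹ := by
      conv_lhs => rw [hkp t]
      rw [mul_inv_rev]
    have harg : t⁻¹ = (↑(⟨(pp t)⁻¹, inv_mem (hpp t)⟩ : ↥P) : G) * (kk t)⁻¹ := hti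
    rw [harg, hfIndmem (Φ t v) ⟨(pp t)⁻¹, inv_mem (hpp t)⟩ ((kk t)⁻¹),
      hunitk (Φ t v) ((kk t)⁻¹) (inv_mem (hkk t))]
    have hw : ρ ⟨(kk t)⁻¹, inv_mem (hkk t)⟩ (Φ t v) = Φ (pp t) v := by
      have h4 : Φ ((kk t)⁻¹ * t) = ρ ⟨(kk t)⁻¹, inv_mem (hkk t)⟩ * Φ t :=
        hecke_left hΦ (inv_mem (hkk t)) t
      have habs5 : ∀ t' k' p' : G, t' = k' * p' → k'⁻¹ * t' = p' := by
        intro t' k' p' h'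
        subst h'
        group
      have h5 : (kk t)⁻¹ * t = pp t := habs5 t (kk t) (pp t) (hkp t)
      calc ρ ⟨(kk t)⁻¹, inv_mem (hkk t)⟩ (Φ t v)
          = (ρ ⟨(kk t)⁻¹, inv_mem (hkk t)⟩ * Φ t) v := rfl
        _ = Φ ((kk t)⁻¹ * t) v := by rw [← h4]
        _ = Φ (pp t) v := by rw [h5]
    rw [hw]
    have hsplit : (⟨(pp t)⁻¹, inv_mem (hpp t)⟩ : ↥P)
        = ⟨(nn (pp t) (hpp t))⁻¹, inv_mem (hNP (hnn (pp t) (hpp t)))⟩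
          * ⟨(mm (pp t) (hpp t))⁻¹, inv_mem (hMP (hmm (pp t) (hpp t)))⟩ := by
      ext
      show (pp t)⁻¹ = (nn (pp t) (hpp t))⁻¹ * (mm (pp t) (hpp t))⁻¹
      conv_lhs => rw [hmn (pp t) (hpp t)]
      rw [mul_inv_rev]
    rw [hsplit, map_mul, Module.End.mul_apply,
      hτ₀N ⟨(nn (pp t) (hpp t))⁻¹, inv_mem (hNP (hnn (pp t) (hpp t)))⟩
        (inv_mem (hnn (pp t) (hpp t))),
      hτ₀M ⟨(mm (pp t) (hpp t))⁻¹, inv_mem (hMP (hmm (pp t) (hpp t)))⟩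
        (inv_mem (hmm (pp t) (hpp t))), Module.End.one_apply]
    rfl
  -- step 4 : each term of the sum
  have hterm3 : ∀ q ∈ T,
      (↑((↑(I₀ ((cIndRep K ρ (Quotient.out q)⁻¹)
            (unitElt K ρ (Φ (Quotient.out q) v)))) : G → ↥(cIndBar K M N ρ hnorm)) 1)
          : ↥M → V ⧸ coinvKer K N ρ) m
        = if condP q then FB (cmap q) else 0 := by
    intro q _
    have e1 : (↑(I₀ ((cIndRep K ρ (Quotient.out q)⁻¹)
          (unitElt K ρ (Φ (Quotient.out q) v)))) : G → ↥(cIndBar K M N ρ hnorm)) 1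
        = (↑(I₀ (unitElt K ρ (Φ (Quotient.out q) v)))
            : G → ↥(cIndBar K M N ρ hnorm)) (Quotient.out q)⁻¹ := by
      rw [hIeq, one_mul]
    rw [e1, heval (Quotient.out q)]
    have hshow2 : (↑((cIndRep ((K ⊓ M).subgroupOf M) (rhoBar K M N ρ hnorm))
          ⟨(mm (pp (Quotient.out q)) (hpp (Quotient.out q)))⁻¹,
            inv_mem (hmm (pp (Quotient.out q)) (hpp (Quotient.out q)))⟩
          (unitBar K M N ρ hnorm (Φ (pp (Quotient.out q)) v))) : ↥M → V ⧸ coinvKer K N ρ) m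
        = unitFn ((K ⊓ M).subgroupOf M) (rhoBar K M N ρ hnorm)
            (Submodule.Quotient.mk (Φ (pp (Quotient.out q)) v))
            (m * ⟨(mm (pp (Quotient.out q)) (hpp (Quotient.out q)))⁻¹,
              inv_mem (hmm (pp (Quotient.out q)) (hpp (Quotient.out q)))⟩) := rfl
    rw [hshow2, unitFn]
    by_cases hcond : (m * (⟨(mm (pp (Quotient.out q)) (hpp (Quotient.out q)))⁻¹,
        inv_mem (hmm (pp (Quotient.out q)) (hpp (Quotient.out q)))⟩ : ↥M))
        ∈ (K ⊓ M).subgroupOf M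
    · rw [dif_pos hcond, if_pos hcond, rhoBar_apply_mk]
      have hKmem : (↑m : G) * (mm (pp (Quotient.out q)) (hpp (Quotient.out q)))⁻¹ ∈ K :=
        (Subgroup.mem_subgroupOf.mp hcond).1
      have e2 : (ρ ⟨(↑m : G) * (mm (pp (Quotient.out q)) (hpp (Quotient.out q)))⁻¹, hKmem⟩)
            (Φ (pp (Quotient.out q)) v)
          = Φ (((↑m : G) * (mm (pp (Quotient.out q)) (hpp (Quotient.out q)))⁻¹)
              * pp (Quotient.out q)) v := by
        rw [hecke_left hΦ hKmem]; rfl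
      have habs3 : ∀ p0 m1 n1 : G, p0 = m1 * n1 →
          ((↑m : G) * m1⁻¹) * p0 = ((↑m : G) * n1 * (↑m : G)⁻¹) * ↑m := by
        intro p0 m1 n1 hp
        subst hp
        group
      have e3 : ((↑m : G) * (mm (pp (Quotient.out q)) (hpp (Quotient.out q)))⁻¹)
            * pp (Quotient.out q)
          = ((↑m : G) * nn (pp (Quotient.out q)) (hpp (Quotient.out q)) * (↑m : G)⁻¹) * ↑m :=
        habs3 _ _ _ (hmn (pp (Quotient.out q)) (hpp (Quotient.out q)))
      have e4 : Submodule.Quotient.mk (p := coinvKer K N ρ)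
          ((ρ ⟨(↑m : G) * (mm (pp (Quotient.out q)) (hpp (Quotient.out q)))⁻¹, hKmem⟩)
            (Φ (pp (Quotient.out q)) v)) = FB (cmap q) := by
        rw [e2, e3]
        exact hcos Φ hΦ m v
          ⟨(↑m : G) * nn (pp (Quotient.out q)) (hpp (Quotient.out q)) * (↑m : G)⁻¹,
            hn2mem (Quotient.out q)⟩
          (Quotient.out (cmap q)) (by rw [Quotient.out_eq])
      exact e4
    · rw [dif_neg hcond, if_neg hcond]
  -- step 5 : the left inverse of `cmap` and finiteness of the support of `FB`
  have habsq : ∀ t k1 m1 n1 : G, t = k1 * (m1 * n1) →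
      (↑m : G) * n1 * (↑m : G)⁻¹ * ↑m * t⁻¹ = (↑m : G) * m1⁻¹ * k1⁻¹ := by
    intro t k1 m1 n1 ht
    subst ht
    group
  have hqmap : ∀ q : Quotient (QuotientGroup.rightRel K), condP q →
      Quotient.mk (QuotientGroup.rightRel K)
        ((((↑m : G) * nn (pp (Quotient.out q)) (hpp (Quotient.out q)) * (↑m : G)⁻¹)) * ↑m)
        = q := by
    intro q hc
    have hKm : (↑m : G) * (mm (pp (Quotient.out q)) (hpp (Quotient.out q)))⁻¹ ∈ K :=
      (Subgroup.mem_subgroupOf.mp hc).1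
    conv_rhs => rw [← Quotient.out_eq q]
    refine (Quotient.sound (QuotientGroup.rightRel_apply.mpr ?_)).symm
    rw [habsq (Quotient.out q) (kk (Quotient.out q))
      (mm (pp (Quotient.out q)) (hpp (Quotient.out q)))
      (nn (pp (Quotient.out q)) (hpp (Quotient.out q))) (hdect (Quotient.out q))]
    exact mul_mem hKm (inv_mem (hkk (Quotient.out q)))
  have hwd : ∀ n₁ n₂ : ↥N,
      Quotient.mk (QuotientGroup.rightRel ((K ⊓ N).subgroupOf N)) n₁
        = Quotient.mk (QuotientGroup.rightRel ((K ⊓ N).subgroupOf N)) n₂ →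
      Quotient.mk (QuotientGroup.rightRel K) ((↑n₁ : G) * ↑m)
        = Quotient.mk (QuotientGroup.rightRel K) ((↑n₂ : G) * ↑m) := by
    intro n₁ n₂ h
    have hrel : (↑(n₂ * n₁⁻¹) : G) ∈ K ⊓ N :=
      (Subgroup.mem_subgroupOf).mp (QuotientGroup.rightRel_apply.mp (Quotient.exact h))
    refine Quotient.sound (QuotientGroup.rightRel_apply.mpr ?_)
    have he : ((↑n₂ : G) * ↑m) * ((↑n₁ : G) * ↑m)⁻¹ = (↑(n₂ * n₁⁻¹) : G) := by
      push_cast; group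
    rw [he]
    exact hrel.1
  have hFBfin : (Function.support FB).Finite := by
    apply (key1 Φ hΦ m v).subset
    intro c hc
    rw [Function.mem_support] at hc
    intro h0
    refine hc ?_
    rw [hFB]
    simp [h0]
  -- step 6 : assembling the sum
  calc Ψ m (Submodule.Quotient.mk (p := coinvKer K N ρ) v)
      = (↑((↑(I₀ f) : G → ↥(cIndBar K M N ρ hnorm)) 1) : ↥M → V ⧸ coinvKer K N ρ) m := h1
    _ = ∑ q ∈ T, (↑((↑(I₀ ((cIndRep K ρ (Quotient.out q)⁻¹)
          (unitElt K ρ (Φ (Quotient.out q) v)))) : G → ↥(cIndBar K M N ρ hnorm)) 1)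
          : ↥M → V ⧸ coinvKer K N ρ) m := by
        rw [hdecomp, map_sum]
        rw [AddSubmonoidClass.coe_finset_sum, Finset.sum_apply,
          AddSubmonoidClass.coe_finset_sum, Finset.sum_apply]
    _ = ∑ q ∈ T, (if condP q then FB (cmap q) else 0) := Finset.sum_congr rfl hterm3
    _ = ∑ q ∈ T.filter condP, FB (cmap q) :=
        (Finset.sum_filter condP fun q => FB (cmap q)).symm
    _ = ∑ q ∈ (T.filter condP).filter (fun q => FB (cmap q) ≠ 0), FB (cmap q) :=
        (Finset.sum_filter_ne_zero (T.filter condP)).symm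
    _ = ∑ c ∈ hFBfin.toFinset, FB c := by
        refine Finset.sum_bij (fun q _ => cmap q) ?_ ?_ ?_ ?_
        · -- maps into the support
          intro q hq
          rw [Finset.mem_filter] at hq
          rw [Set.Finite.mem_toFinset, Function.mem_support]
          exact hq.2
        · -- injective
          intro q₁ hq₁ q₂ hq₂ hceq
          rw [Finset.mem_filter, Finset.mem_filter] at hq₁ hq₂
          have h₁ := hqmap q₁ hq₁.1.2
          have h₂ := hqmap q₂ hq₂.1.2
          rw [← h₁, ← h₂]
          exact hwd _ _ hceq
        · -- surjective
          intro c hc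
          rw [Set.Finite.mem_toFinset, Function.mem_support] at hc
          have hΦc : Φ ((↑(Quotient.out c) : G) * ↑m) v ≠ 0 := by
            intro h0
            refine hc ?_
            rw [hFB]
            simp [h0]
          have hΦc' : Φ ((↑(Quotient.out c) : G) * ↑m) ≠ 0 := by
            intro h0
            exact hΦc (by rw [h0]; rfl)
          have hqT : Quotient.mk (QuotientGroup.rightRel K) ((↑(Quotient.out c) : G) * ↑m) ∈ T :=
            hT _ hΦc'
          set x : G := (↑(Quotient.out c) : G) * ↑m with hxdef
          set q : Quotient (QuotientGroup.rightRel K)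
            := Quotient.mk (QuotientGroup.rightRel K) x with hqdef
          have hk₀ : x * (Quotient.out q)⁻¹ ∈ K :=
            QuotientGroup.rightRel_apply.mp (Quotient.exact (Quotient.out_eq q))
          have h2 : (Quotient.out q)⁻¹
              = (nn (pp (Quotient.out q)) (hpp (Quotient.out q)))⁻¹
                * (mm (pp (Quotient.out q)) (hpp (Quotient.out q)))⁻¹
                * (kk (Quotient.out q))⁻¹ := by
            have habs6 : ∀ t k1 m1 n1 : G, t = k1 * (m1 * n1) →
                t⁻¹ = n1⁻¹ * m1⁻¹ * k1⁻¹ := by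
              intro t k1 m1 n1 ht
              subst ht
              group
            exact habs6 _ _ _ _ (hdect (Quotient.out q))
          have hx₀K : x * (nn (pp (Quotient.out q)) (hpp (Quotient.out q)))⁻¹
              * (mm (pp (Quotient.out q)) (hpp (Quotient.out q)))⁻¹ ∈ K := by
            have h1 : x * (nn (pp (Quotient.out q)) (hpp (Quotient.out q)))⁻¹
                * (mm (pp (Quotient.out q)) (hpp (Quotient.out q)))⁻¹
                = (x * (Quotient.out q)⁻¹) * kk (Quotient.out q) := by
              rw [h2]
              group
            rw [h1]
            exact mul_mem hk₀ (hkk _)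
          have hx₀P : x * (nn (pp (Quotient.out q)) (hpp (Quotient.out q)))⁻¹
              * (mm (pp (Quotient.out q)) (hpp (Quotient.out q)))⁻¹ ∈ P := by
            exact mul_mem (mul_mem (mul_mem (hNP (Quotient.out c).2) (hMP m.2))
              (inv_mem (hNP (hnn _ _)))) (inv_mem (hMP (hmm _ _)))
          obtain ⟨a, haKM, bb, hbKN, hab⟩ := hKP _ ⟨hx₀K, hx₀P⟩
          have hab' : x = a * bb * mm (pp (Quotient.out q)) (hpp (Quotient.out q))
              * nn (pp (Quotient.out q)) (hpp (Quotient.out q)) := by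
            rw [← hab]
            group
          have hnu : (↑m : G)⁻¹ * ↑(Quotient.out c) * ↑m ∈ N := by
            have h6 := hNnormal ((↑m : G))⁻¹ (inv_mem (hMP m.2)) ↑(Quotient.out c)
              (Quotient.out c).2
            rwa [inv_inv] at h6
          have hE : (a * mm (pp (Quotient.out q)) (hpp (Quotient.out q)))⁻¹ * ↑m
              = ((mm (pp (Quotient.out q)) (hpp (Quotient.out q)))⁻¹ * bb
                  * mm (pp (Quotient.out q)) (hpp (Quotient.out q))
                  * nn (pp (Quotient.out q)) (hpp (Quotient.out q)))
                * ((↑m : G)⁻¹ * ↑(Quotient.out c) * ↑m)⁻¹ := by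
            have habs7 : ∀ n0 mG a' b' m1 n1 : G, n0 * mG = a' * b' * m1 * n1 →
                (a' * m1)⁻¹ * mG = (m1⁻¹ * b' * m1 * n1) * (mG⁻¹ * n0 * mG)⁻¹ := by
              intro n0 mG a' b' m1 n1 h7
              have hn0 : n0 = a' * b' * m1 * n1 * mG⁻¹ := by rw [← h7]; group
              rw [hn0]
              group
            exact habs7 ↑(Quotient.out c) ↑m a bb _ _ hab'
          have huMN : (a * mm (pp (Quotient.out q)) (hpp (Quotient.out q)))⁻¹ * ↑m ∈ M ⊓ N := by
            refine Subgroup.mem_inf.mpr ⟨mul_mem (inv_mem (mul_mem haKM.2 (hmm _ _))) m.2, ?_⟩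
            rw [hE]
            have hconj : (mm (pp (Quotient.out q)) (hpp (Quotient.out q)))⁻¹ * bb
                * mm (pp (Quotient.out q)) (hpp (Quotient.out q)) ∈ N := by
              have h9 := hNnormal (mm (pp (Quotient.out q)) (hpp (Quotient.out q)))⁻¹
                (inv_mem (hMP (hmm _ _))) bb hbKN.2
              rwa [inv_inv] at h9
            exact mul_mem (mul_mem hconj (hnn _ _)) (inv_mem hnu)
          rw [hMN] at huMN
          have hu1 : (a * mm (pp (Quotient.out q)) (hpp (Quotient.out q)))⁻¹ * ↑m = 1 :=
            Subgroup.mem_bot.mp huMN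
          have heqm : a * mm (pp (Quotient.out q)) (hpp (Quotient.out q)) = (↑m : G) :=
            inv_mul_eq_one.mp hu1
          have hν : (mm (pp (Quotient.out q)) (hpp (Quotient.out q)))⁻¹ * bb
              * mm (pp (Quotient.out q)) (hpp (Quotient.out q))
              * nn (pp (Quotient.out q)) (hpp (Quotient.out q))
              = (↑m : G)⁻¹ * ↑(Quotient.out c) * ↑m := by
            have h8 : ((mm (pp (Quotient.out q)) (hpp (Quotient.out q)))⁻¹ * bb
                * mm (pp (Quotient.out q)) (hpp (Quotient.out q))
                * nn (pp (Quotient.out q)) (hpp (Quotient.out q)))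
                * ((↑m : G)⁻¹ * ↑(Quotient.out c) * ↑m)⁻¹ = 1 := by
              rw [← hE, hu1]
            exact mul_inv_eq_one.mp h8
          have hcond : condP q := by
            rw [hcondP]
            simp only
            rw [Subgroup.mem_subgroupOf]
            have hcoe : (↑((m * ⟨(mm (pp (Quotient.out q)) (hpp (Quotient.out q)))⁻¹,
                inv_mem (hmm (pp (Quotient.out q)) (hpp (Quotient.out q)))⟩ : ↥M)) : G) = a := by
              show (↑m : G) * (mm (pp (Quotient.out q)) (hpp (Quotient.out q)))⁻¹ = a
              rw [← heqm]
              group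
            rw [hcoe]
            exact haKM
          have hn1eq : nn (pp (Quotient.out q)) (hpp (Quotient.out q))
              = (mm (pp (Quotient.out q)) (hpp (Quotient.out q)))⁻¹ * bb⁻¹
                * mm (pp (Quotient.out q)) (hpp (Quotient.out q))
                * ((↑m : G)⁻¹ * ↑(Quotient.out c) * ↑m) := by
            rw [← hν]
            group
          have hceq : cmap q = c := by
            rw [hcmap]
            simp only
            conv_rhs => rw [← Quotient.out_eq c]
            refine (Quotient.sound (QuotientGroup.rightRel_apply.mpr ?_)).symm
            rw [Subgroup.mem_subgroupOf]
            have hcoe2 : (↑((⟨(↑m : G) * nn (pp (Quotient.out q)) (hpp (Quotient.out q))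
                  * (↑m : G)⁻¹, hn2mem (Quotient.out q)⟩ : ↥N) * (Quotient.out c)⁻¹) : G)
                = a * bb⁻¹ * a⁻¹ := by
              show ((↑m : G) * nn (pp (Quotient.out q)) (hpp (Quotient.out q)) * (↑m : G)⁻¹)
                * (↑(Quotient.out c) : G)⁻¹ = a * bb⁻¹ * a⁻¹
              rw [hn1eq, ← heqm]
              group
            rw [hcoe2]
            exact hnorm ⟨a, haKM⟩ bb⁻¹ (inv_mem hbKN)
          refine ⟨q, ?_, hceq⟩
          rw [Finset.mem_filter, Finset.mem_filter]
          refine ⟨⟨hqT, hcond⟩, ?_⟩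
          rw [hceq]
          exact hc
        · intro q hq
          rfl
    _ = ∑ᶠ c, FB c := (finsum_eq_sum FB hFBfin).symm

end Paper
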